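/- Let U be a nonempty finite type, X take values in {A,B}, and let p be a joint pmf of (U,X) with P(X=x, U=u)>0 for every u and x. Let Q be generated by the kernel w({x}|u,x) = π(x)/P(X=x|U=u), w(q'|u,x)=0 for the other singleton q', and w(qAB|u,x) = 1 − π(x)/P(X=x|U=u), where π(x) = min over u of P(X=x|U=u). Then for every u, P(Q={x} | U=u) = π(x) and P(Q=qAB | U=u) = 1 − π(A) − π(B); in particular Q is statistically independent of U. -/

import Mathlib

/-- The two sources. -/
inductive Src | A | B
deriving DecidableEq

instance : Fintype Src := ⟨{Src.A, Src.B}, by intro x; cases x <;> simp⟩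

/-- The three possible queries: only source A, only source B, or both. -/
inductive Qry | qA | qB | qAB
deriving DecidableEq

instance : Fintype Qry := ⟨{Qry.qA, Qry.qB, Qry.qAB}, by intro x; cases x <;> simp⟩

/-- The singleton query associated to a source. -/
def singletonQ : Src → Qry
  | Src.A => Qry.qA
  | Src.B => Qry.qB

/-- The conditional probability `P(X = x | U = u)` derived from the joint pmf `p` of `(U,X)`. -/
noncomputable def condP {U : Type} [Fintype U] (p : U → Src → ℝ) (x : Src) (u : U) : ℝ :=
  p u x / (∑ x', p u x')

/-- `π(x) = min_u P(X = x | U = u)`. -/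
noncomputable def piMin {U : Type} [Fintype U] [Nonempty U] (p : U → Src → ℝ) (x : Src) : ℝ :=
  Finset.univ.inf' Finset.univ_nonempty (fun u => condP p x u)

/-- The ON-OFF privacy query kernel: `w({x}|u,x) = π(x)/P(X=x|U=u)`, the other singleton gets
probability `0`, and `w(qAB|u,x) = 1 - π(x)/P(X=x|U=u)`. -/
noncomputable def kernel {U : Type} [Fintype U] [Nonempty U] (p : U → Src → ℝ)
    (u : U) (x : Src) (q : Qry) : ℝ :=
  if q = singletonQ x then piMin p x / condP p x u
  else if q = Qry.qAB then 1 - piMin p x / condP p x u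
  else 0


/-- Under the ON-OFF privacy kernel, for every `u` we have `P(Q={x} | U=u) = π(x)` and
`P(Q=qAB | U=u) = 1 - π(A) - π(B)`; in particular `Q` is statistically independent of `U`. -/
theorem kernel_private {U : Type} [Fintype U] [Nonempty U]
    (p : U → Src → ℝ)
    (hpos : ∀ u x, 0 < p u x)
    (hsum : ∑ u, ∑ x, p u x = 1) :
    (∀ u, ∀ x : Src,
      (∑ x', p u x' * kernel p u x' (singletonQ x)) / (∑ x', p u x') = piMin p x) ∧
    (∀ u, (∑ x', p u x' * kernel p u x' Qry.qAB) / (∑ x', p u x')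
      = 1 - piMin p Src.A - piMin p Src.B) ∧
    (∀ u q, ∑ x', p u x' * kernel p u x' q
      = (∑ x', p u x') * (∑ u', ∑ x', p u' x' * kernel p u' x' q)) := by
  have sumSrc : ∀ f : Src → ℝ, ∑ x, f x = f Src.A + f Src.B := by
    intro f
    rw [show (Finset.univ : Finset Src) = {Src.A, Src.B} from rfl]
    simp
  have hS : ∀ u, 0 < ∑ x', p u x' := by
    intro u
    rw [sumSrc]
    have := hpos u Src.A; have := hpos u Src.B; linarith
  have hcond : ∀ x u, 0 < condP p x u := fun x u => div_pos (hpos u x) (hS u)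
  have hpi : ∀ x, 0 < piMin p x := by
    intro x
    rw [piMin, Finset.lt_inf'_iff]
    exact fun u _ => hcond x u
  have hx : ∀ u x, p u x * (piMin p x / condP p x u) = (∑ x', p u x') * piMin p x := by
    intro u x
    have h1 : p u x ≠ 0 := (hpos u x).ne'
    have h2 : (∑ x', p u x') ≠ 0 := (hS u).ne'
    rw [condP]
    field_simp
  have key1 : ∀ u x, ∑ x', p u x' * kernel p u x' (singletonQ x)
      = (∑ x', p u x') * piMin p x := by
    intro u x
    cases x <;>
      · rw [sumSrc]
        simp only [kernel, singletonQ, reduceCtorEq, reduceIte, if_true, if_false, mul_zero,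
          add_zero, zero_add, mul_one]
        exact hx u _
  have key2 : ∀ u, ∑ x', p u x' * kernel p u x' Qry.qAB
      = (∑ x', p u x') * (1 - piMin p Src.A - piMin p Src.B) := by
    intro u
    rw [sumSrc]
    simp only [kernel, singletonQ, reduceCtorEq, reduceIte]
    rw [mul_sub, mul_sub, hx u Src.A, hx u Src.B]
    linear_combination (-1 : ℝ) * sumSrc (p u)
  have hglobA : ∑ u', ∑ x', p u' x' * kernel p u' x' (singletonQ Src.A) = piMin p Src.A := by
    calc ∑ u', ∑ x', p u' x' * kernel p u' x' (singletonQ Src.A)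
        = ∑ u', (∑ x', p u' x') * piMin p Src.A :=
          Finset.sum_congr rfl fun u' _ => key1 u' Src.A
      _ = (∑ u', ∑ x', p u' x') * piMin p Src.A := by rw [Finset.sum_mul]
      _ = piMin p Src.A := by rw [hsum, one_mul]
  have hglobB : ∑ u', ∑ x', p u' x' * kernel p u' x' (singletonQ Src.B) = piMin p Src.B := by
    calc ∑ u', ∑ x', p u' x' * kernel p u' x' (singletonQ Src.B)
        = ∑ u', (∑ x', p u' x') * piMin p Src.B :=
          Finset.sum_congr rfl fun u' _ => key1 u' Src.B
      _ = (∑ u', ∑ x', p u' x') * piMin p Src.B := by rw [Finset.sum_mul]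
      _ = piMin p Src.B := by rw [hsum, one_mul]
  have hglobAB : ∑ u', ∑ x', p u' x' * kernel p u' x' Qry.qAB
      = 1 - piMin p Src.A - piMin p Src.B := by
    calc ∑ u', ∑ x', p u' x' * kernel p u' x' Qry.qAB
        = ∑ u', (∑ x', p u' x') * (1 - piMin p Src.A - piMin p Src.B) :=
          Finset.sum_congr rfl fun u' _ => key2 u'
      _ = (∑ u', ∑ x', p u' x') * (1 - piMin p Src.A - piMin p Src.B) := by
          rw [Finset.sum_mul]
      _ = _ := by rw [hsum, one_mul]
  refine ⟨?_, ?_, ?_⟩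
  · intro u x
    rw [key1 u x, mul_div_cancel_left₀ _ (hS u).ne']
  · intro u
    rw [key2 u, mul_div_cancel_left₀ _ (hS u).ne']
  · intro u q
    cases q
    · rw [show Qry.qA = singletonQ Src.A from rfl, key1 u Src.A, hglobA]
    · rw [show Qry.qB = singletonQ Src.B from rfl, key1 u Src.B, hglobB]
    · rw [key2 u, hglobAB]
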